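/- Let n ≥ 1 and q ≥ 1 be integers, let L_i > 0 and α_i ∈ (0, 2/(L_i+1)) for i = 1,…,n, and set β = 1/(2(n+1)). Then the quadratic form Q_{Ŝ}(λ,x,y) = (1/β)Σ_{i=1}^n‖λ_i‖² + ‖x‖² + Σ_{i=1}^n (1/α_i − L_i/2)‖y_i‖² + 2Σ_{i=1}^n⟨λ_i, y_i − x⟩ is positive definite: Q_{Ŝ}(λ,x,y) > 0 for every (λ,x,y) ∈ (ℝ^q)^n × ℝ^q × (ℝ^q)^n with (λ,x,y) ≠ 0. -/
import Mathlib


open RealInnerProductSpace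

lemma key_nonneg (a c p r s : ℝ) (ha : 0 < a) (hac : 1 < a*c)
    (hs : -(p*r) ≤ s) : 0 ≤ a*p^2 + 2*s + c*r^2 := by
  nlinarith [sq_nonneg (a*p - r), sq_nonneg r,
    mul_nonneg (sub_pos.mpr hac).le (sq_nonneg r)]

lemma key_pos (a c p r s : ℝ) (ha : 0 < a) (hac : 1 < a*c)
    (hs : -(p*r) ≤ s) (hpr : p ≠ 0 ∨ r ≠ 0) : 0 < a*p^2 + 2*s + c*r^2 := by
  rcases hpr with hp | hr
  · have hp2 : 0 < p^2 := by positivity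
    have hcpos : 0 < c := by nlinarith
    nlinarith [sq_nonneg (c*r - p), mul_pos hp2 (sub_pos.mpr hac), hcpos]
  · have hr2 : 0 < r^2 := by positivity
    nlinarith [sq_nonneg (a*p - r), sq_nonneg r,
      mul_pos (sub_pos.mpr hac) hr2]

/-- Positive definiteness of the quadratic form of the matrix `Ŝ` from
Proposition 1 of the paper, under Assumption 2. -/
theorem Shat_quadratic_form_posDef
    (n q : ℕ) (hn : 1 ≤ n) (hq : 1 ≤ q)
    (L α : Fin n → ℝ) (hL : ∀ i, 0 < L i)
    (hα : ∀ i, 0 < α i ∧ α i < 2 / (L i + 1))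
    (β : ℝ) (hβ : β = 1/(2 * ((n : ℝ) + 1)))
    (lam : Fin n → EuclideanSpace ℝ (Fin q))
    (x : EuclideanSpace ℝ (Fin q)) (y : Fin n → EuclideanSpace ℝ (Fin q))
    (hne : (lam, x, y) ≠ 0) :
    0 < (1/β) * ∑ i, ‖lam i‖^2 + ‖x‖^2 + ∑ i, (1/α i - L i/2) * ‖y i‖^2
      + 2 * ∑ i, ⟪lam i, y i - x⟫ := by
  have hn0 : (0:ℝ) < n := by exact_mod_cast hn
  have hnn : (1:ℝ) ≤ n := by exact_mod_cast hn
  set F : Fin n → ℝ := fun i =>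
    ((n:ℝ)+1)*‖lam i‖^2 + 2*⟪lam i, y i⟫ + (1/α i - L i/2)*‖y i‖^2 with hF
  set G : Fin n → ℝ := fun i =>
    ((n:ℝ)+1)*‖lam i‖^2 + 2*(-⟪lam i, x⟫) + (1/(n:ℝ))*‖x‖^2 with hG
  -- the coefficient bound
  have hc : ∀ i, 1 < ((n:ℝ)+1) * (1/α i - L i/2) := by
    intro i
    obtain ⟨hα0, hα2⟩ := hα i
    have hL1 : (0:ℝ) < L i + 1 := by linarith [hL i]
    have h1 : α i * (L i + 1) < 2 := (lt_div_iff₀ hL1).mp hα2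
    have h2 : (L i + 1)/2 < 1/α i := by
      rw [div_lt_div_iff₀ (by norm_num) hα0]; nlinarith
    nlinarith
  have hcn : 1 < ((n:ℝ)+1) * (1/(n:ℝ)) := by
    rw [mul_one_div, lt_div_iff₀ hn0]; linarith
  have hFs : ∀ i, -(‖lam i‖ * ‖y i‖) ≤ ⟪lam i, y i⟫ := fun i =>
    neg_le_of_abs_le (abs_real_inner_le_norm _ _)
  have hGs : ∀ i, -(‖lam i‖ * ‖x‖) ≤ -⟪lam i, x⟫ := fun i =>
    neg_le_neg (real_inner_le_norm _ _)
  have hFnn : ∀ i, 0 ≤ F i := fun i =>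
    key_nonneg _ _ _ _ _ (by linarith) (hc i) (hFs i)
  have hGnn : ∀ i, 0 ≤ G i := fun i =>
    key_nonneg _ _ _ _ _ (by linarith) hcn (hGs i)
  -- rewrite the quadratic form as a sum
  have hβ' : 1/β = 2*((n:ℝ)+1) := by
    rw [hβ, one_div_one_div]
  have hxsum : ‖x‖^2 = ∑ _i : Fin n, (1/(n:ℝ))*‖x‖^2 := by
    rw [Finset.sum_const, Finset.card_univ, Fintype.card_fin, nsmul_eq_mul]
    field_simp
  have hQ : (1/β) * ∑ i, ‖lam i‖^2 + ‖x‖^2 + ∑ i, (1/α i - L i/2) * ‖y i‖^2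
      + 2 * ∑ i, ⟪lam i, y i - x⟫ = ∑ i, (F i + G i) := by
    rw [hβ', hxsum, Finset.mul_sum, Finset.mul_sum,
      ← Finset.sum_add_distrib, ← Finset.sum_add_distrib,
      ← Finset.sum_add_distrib]
    refine Finset.sum_congr rfl fun i _ => ?_
    rw [inner_sub_right]
    simp only [hF, hG]
    ring
  rw [hQ]
  -- nonvanishing
  have hex : (∃ i, lam i ≠ 0) ∨ x ≠ 0 ∨ (∃ i, y i ≠ 0) := by
    by_contra h
    push_neg at h
    obtain ⟨h1, h2, h3⟩ := h
    exact hne (by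
      simp only [Prod.ext_iff, Prod.fst_zero, Prod.snd_zero]
      exact ⟨funext h1, h2, funext h3⟩)
  have hpos : ∃ i ∈ Finset.univ, 0 < F i + G i := by
    rcases hex with ⟨i, hi⟩ | hx | ⟨i, hi⟩
    · refine ⟨i, Finset.mem_univ i, ?_⟩
      have : 0 < F i := key_pos _ _ _ _ _ (by linarith) (hc i) (hFs i)
        (Or.inl (norm_ne_zero_iff.mpr hi))
      linarith [hGnn i]
    · refine ⟨⟨0, hn⟩, Finset.mem_univ _, ?_⟩
      have : 0 < G ⟨0, hn⟩ := key_pos _ _ _ _ _ (by linarith) hcn (hGs _)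
        (Or.inr (norm_ne_zero_iff.mpr hx))
      linarith [hFnn ⟨0, hn⟩]
    · refine ⟨i, Finset.mem_univ i, ?_⟩
      have : 0 < F i := key_pos _ _ _ _ _ (by linarith) (hc i) (hFs i)
        (Or.inr (norm_ne_zero_iff.mpr hi))
      linarith [hGnn i]
  exact Finset.sum_pos' (fun i _ => by linarith [hFnn i, hGnn i]) hpos
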